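/- arXiv:physics/9709008 — 3 statements merged into one kernel-verified Lean document; each statement's English description precedes it below -/
import Mathlib

section
/- Let (G, [·,·]) be a finite-dimensional real Lie algebra and ω a non-degenerate skew-symmetric bilinear form on G satisfying the 2-cocycle identity ω([x,y],z) + ω([y,z],x) + ω([z,x],y) = 0. Define a multiplication on G by ω(x·y, z) = −ω(y, [x,z]) for all z. Then this multiplication is left-symmetric: (x·y)·z − x·(y·z) = (y·x)·z − y·(x·z) for all x,y,z. -/
/-- On a symplectic Lie algebra (finite-dimensional real Lie
algebra with a non-degenerate skew-symmetric 2-cocycle ω), the multiplication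
defined by `ω(x·y, z) = −ω(y,[x,z])` is left-symmetric. -/
theorem symplectic_lie_algebra_mul_left_symmetric
    {L : Type*} [LieRing L] [LieAlgebra ℝ L]
    [Module.Finite ℝ L]
    (ω : L →ₗ[ℝ] L →ₗ[ℝ] ℝ)
    (hskew : ∀ x y : L, ω x y = -ω y x)
    (hnondeg : ∀ x : L, (∀ y : L, ω x y = 0) → x = 0)
    (hcocycle : ∀ x y z : L, ω ⁅x, y⁆ z + ω ⁅y, z⁆ x + ω ⁅z, x⁆ y = 0)
    (mul : L → L → L)
    (hmul : ∀ x y z : L, ω (mul x y) z = -ω y ⁅x, z⁆) :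
    ∀ x y z : L,
      mul (mul x y) z - mul x (mul y z) = mul (mul y x) z - mul y (mul x z) := by
  have key : ∀ a b : L, (∀ w : L, ω (a - b) w = 0) → a = b := by
    intro a b h
    have := hnondeg (a - b) h
    exact sub_eq_zero.mp this
  intro x y z
  -- commutator identity: mul x y - mul y x = ⁅x, y⁆
  have hbr : mul x y - mul y x = ⁅x, y⁆ := by
    apply key
    intro w
    have h1 := hmul x y w
    have h2 := hmul y x w
    have hc := hcocycle x y w
    have hs1 := hskew y ⁅x, w⁆
    have hs2 := hskew x ⁅y, w⁆
    have hl : ω ⁅w, x⁆ y = -ω ⁅x, w⁆ y := by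
      rw [show (⁅w, x⁆ : L) = -⁅x, w⁆ by rw [← lie_skew]]
      simp only [map_neg, LinearMap.neg_apply]
    simp only [map_sub, LinearMap.sub_apply]
    linarith
  apply key
  intro w
  have e1 := hmul (mul x y) z w
  have e2 := hmul (mul y x) z w
  have e3 := hmul x (mul y z) w
  have e4 := hmul y (mul x z) w
  have e5 := hmul y z ⁅x, w⁆
  have e6 := hmul x z ⁅y, w⁆
  have e7 : ω z ⁅mul x y, w⁆ - ω z ⁅mul y x, w⁆ = ω z ⁅⁅x, y⁆, w⁆ := by
    rw [← hbr, sub_lie, map_sub]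
  have e8 : ω z ⁅⁅x, y⁆, w⁆ = ω z ⁅x, ⁅y, w⁆⁆ - ω z ⁅y, ⁅x, w⁆⁆ := by
    rw [lie_lie, map_sub]
  simp only [map_sub, LinearMap.sub_apply]
  linarith
end

section
/- Let (G, ω) be a finite-dimensional symplectic Lie algebra that is unimodular (Tr ad(x) = 0 for all x). Then H_1(x) := Tr(R_x) = 0 for all x, where R_x(y) = y·x is the right-multiplication of the associated left-symmetric structure. -/
open LinearMap Module

private lemma trace_dualMap' {K V : Type*} [Field K] [AddCommGroup V] [Module K V]
    [FiniteDimensional K V] (f : V →ₗ[K] V) :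
    LinearMap.trace K (Module.Dual K V) f.dualMap = LinearMap.trace K V f := by
  let b := Module.finBasis K V
  rw [LinearMap.trace_eq_matrix_trace K b f,
    LinearMap.trace_eq_matrix_trace K b.dualBasis f.dualMap]
  have : LinearMap.toMatrix b.dualBasis b.dualBasis f.dualMap
      = (LinearMap.toMatrix b b f).transpose := by
    ext i j
    simp [LinearMap.toMatrix_apply, Matrix.transpose_apply, Basis.dualBasis_repr,
      LinearMap.dualMap_apply]
  rw [this, Matrix.trace_transpose]

private lemma trace_adjoint_eq {L : Type*} [AddCommGroup L] [Module ℝ L]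
    [FiniteDimensional ℝ L]
    (ω : L →ₗ[ℝ] L →ₗ[ℝ] ℝ)
    (hskew : ∀ x y : L, ω x y = -ω y x)
    (hnondeg : ∀ x : L, (∀ y : L, ω x y = 0) → x = 0)
    (f g : L →ₗ[ℝ] L) (h : ∀ y z : L, ω (f y) z = ω y (g z)) :
    LinearMap.trace ℝ L f = LinearMap.trace ℝ L g := by
  set Φ : L →ₗ[ℝ] Module.Dual ℝ L := ω.flip with hΦ
  have hinj : Function.Injective Φ := by
    rw [← LinearMap.ker_eq_bot, LinearMap.ker_eq_bot']
    intro z hz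
    apply hnondeg
    intro y
    rw [hskew, neg_eq_zero]
    exact congrFun (congrArg DFunLike.coe hz) y
  have hsurj : Function.Surjective Φ :=
    (LinearMap.injective_iff_surjective_of_finrank_eq_finrank
      (Subspace.dual_finrank_eq).symm).mp hinj
  let e : L ≃ₗ[ℝ] Module.Dual ℝ L := LinearEquiv.ofBijective Φ ⟨hinj, hsurj⟩
  have hg : g = e.symm.conj f.dualMap := by
    ext y
    apply hinj
    have : Φ (g y) = f.dualMap (Φ y) := by
      ext z
      simp only [hΦ, LinearMap.flip_apply, LinearMap.dualMap_apply]
      exact (h z y).symm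
    simp only [LinearEquiv.conj_apply, LinearMap.coe_comp, Function.comp_apply,
      LinearEquiv.coe_coe]
    have he : ∀ w : L, (e w : Module.Dual ℝ L) = Φ w := fun _ => rfl
    rw [show e.symm.symm = e from rfl]
    rw [show Φ (e.symm (f.dualMap (e y))) = e (e.symm (f.dualMap (e y))) from rfl]
    rw [LinearEquiv.apply_symm_apply, this, he]
  rw [hg, LinearMap.trace_conj', trace_dualMap']

/-- In a finite-dimensional unimodular symplectic Lie algebra,
the first trace polynomial `H₁(x) = Tr(R_x)` vanishes identically. -/
theorem unimodular_symplectic_lie_algebra_H1_zero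
    {L : Type*} [LieRing L] [LieAlgebra ℝ L] [FiniteDimensional ℝ L]
    (ω : L →ₗ[ℝ] L →ₗ[ℝ] ℝ)
    (hskew : ∀ x y : L, ω x y = -ω y x)
    (hnondeg : ∀ x : L, (∀ y : L, ω x y = 0) → x = 0)
    (hcocycle : ∀ x y z : L, ω ⁅x, y⁆ z + ω ⁅y, z⁆ x + ω ⁅z, x⁆ y = 0)
    (mul : L →ₗ[ℝ] L →ₗ[ℝ] L)
    (hmul : ∀ x y z : L, ω (mul x y) z = -ω y ⁅x, z⁆)
    (hunimod : ∀ x : L, LinearMap.trace ℝ L (LieAlgebra.ad ℝ L x) = 0) :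
    ∀ x : L, LinearMap.trace ℝ L (mul.flip x) = 0 := by
  intro x
  have key : LinearMap.trace ℝ L (mul.flip x + LieAlgebra.ad ℝ L x)
      = LinearMap.trace ℝ L (-(LieAlgebra.ad ℝ L x)) := by
    apply trace_adjoint_eq ω hskew hnondeg
    intro y z
    have hc := hcocycle x y z
    have h1 : ω (mul y x) z = -ω x ⁅y, z⁆ := hmul y x z
    have h2 : ω ⁅y, z⁆ x = -ω x ⁅y, z⁆ := hskew _ _
    have h3 : ω ⁅z, x⁆ y = -ω y ⁅z, x⁆ := hskew _ _
    have h4 : ω y ⁅z, x⁆ = -ω y ⁅x, z⁆ := by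
      have : ⁅z, x⁆ = -⁅x, z⁆ := by rw [← lie_skew x z, neg_neg]
      rw [this, map_neg]
    simp only [LinearMap.add_apply, LinearMap.flip_apply, LinearMap.neg_apply,
      LieAlgebra.ad_apply, map_add, map_neg] at *
    linarith [hc, h1, h2, h3, h4]
  simp only [map_add, map_neg, hunimod x, add_zero, neg_zero] at key
  exact key
end

section
/- Let M be a smooth manifold with a Poisson bivector Λ (vanishing Schouten bracket) and suppose two smooth functions H_n, H_{n+1} satisfy the recursion Λ_N^♯ dH_n = Λ^♯ dH_{n+1} for all n in a family {H_n}, where Λ_N(α,β) = Λ(α, N^*β) for a (1,1)-tensor N. If both Λ and Λ_N are Poisson bivectors, then the functions are pairwise in involution with respect to both Poisson brackets: {H_n, H_m}_Λ = {H_n, H_m}_{Λ_N} = 0 for all n, m. -/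
/-- Lenard recursion / bihamiltonian involution. Pointwise
formulation: `M` is the set of points of the manifold, `Λs p` and `ΛNs p`
are the sharp maps `Λ^♯`, `Λ_N^♯ : T*_pM → T_pM` of two Poisson bivectors
(antisymmetry of the bivectors is expressed via their sharp maps), and
`d n p` is the differential `dH_n` at `p`. If the recursion
`Λ_N^♯ dH_n = Λ^♯ dH_{n+1}` holds everywhere, then all the functions are in
involution with respect to both Poisson brackets:
`{H_n,H_m}_Λ = dH_m(Λ^♯ dH_n) = 0` and `{H_n,H_m}_{Λ_N} = dH_m(Λ_N^♯ dH_n) = 0`. -/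
theorem lenard_recursion_involution
    {M : Type*} {V : Type*} [AddCommGroup V] [Module ℝ V]
    (Λs ΛNs : M → Module.Dual ℝ V →ₗ[ℝ] V)
    (d : ℕ → M → Module.Dual ℝ V)
    (hΛanti : ∀ (p : M) (α β : Module.Dual ℝ V), β (Λs p α) = -α (Λs p β))
    (hΛNanti : ∀ (p : M) (α β : Module.Dual ℝ V), β (ΛNs p α) = -α (ΛNs p β))
    (hrec : ∀ (n : ℕ) (p : M), ΛNs p (d n p) = Λs p (d (n + 1) p)) :
    ∀ (n m : ℕ) (p : M),
      (d m p) (Λs p (d n p)) = 0 ∧ (d m p) (ΛNs p (d n p)) = 0 := by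
  have key : ∀ (n m : ℕ) (p : M),
      (d m p) (Λs p (d (n + 1) p)) = (d (m + 1) p) (Λs p (d n p)) := by
    intro n m p
    rw [← hrec n p, hΛNanti p (d n p) (d m p), hrec m p,
      hΛanti p (d n p) (d (m + 1) p)]
  have shift : ∀ (n m : ℕ) (p : M),
      (d m p) (Λs p (d n p)) = (d (n + m) p) (Λs p (d 0 p)) := by
    intro n
    induction n with
    | zero => intro m p; simp
    | succ n ih =>
        intro m p
        rw [key n m p, ih (m + 1) p]
        ring_nf
  have zero : ∀ (s : ℕ) (p : M), (d s p) (Λs p (d 0 p)) = 0 := by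
    intro s p
    have c := hΛanti p (d 0 p) (d s p)
    have a := shift s 0 p
    rw [Nat.add_zero] at a
    rw [a] at c
    linarith
  intro n m p
  have h1 : (d m p) (Λs p (d n p)) = 0 := by
    rw [shift n m p, zero]
  refine ⟨h1, ?_⟩
  rw [hrec n p, shift (n + 1) m p, zero]
end
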